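/- (Theorem 1.) Let Σ be a finite alphabet and let f : Σ* → ℝ be a function that is computed by at least one weighted finite automaton. Then the rank of f, defined as the minimal number n such that some WFA with n states computes f, equals the dimension of the linear span of the rows of the Hankel matrix of f, i.e. of the family of functions {v ↦ f(uv) : u ∈ Σ*} inside the space of real-valued functions on Σ*. -/

import Mathlib

open Matrix

namespace WFAHankelAux

variable {Γ : Type} [Fintype Γ]

/-- The row of the Hankel matrix of `f` indexed by `u`. -/
def row (f : List Γ → ℝ) (u : List Γ) : List Γ → ℝ := fun v => f (u ++ v)

/-- The span of the rows of the Hankel matrix. -/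
def H (f : List Γ → ℝ) : Submodule ℝ (List Γ → ℝ) :=
  Submodule.span ℝ (Set.range (row f))

/-- The linear map sending an initial-weight vector to the function it computes. -/
def evalMap {k : ℕ} (ω : Fin k → ℝ) (A : Γ → Matrix (Fin k) (Fin k) ℝ) :
    (Fin k → ℝ) →ₗ[ℝ] (List Γ → ℝ) where
  toFun β := fun v => β ⬝ᵥ ((v.map A).prod *ᵥ ω)
  map_add' β γ := by funext v; simp [add_dotProduct]
  map_smul' c β := by funext v; simp [smul_dotProduct]

lemma H_le_range {f : List Γ → ℝ} {k : ℕ} {α ω : Fin k → ℝ}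
    {A : Γ → Matrix (Fin k) (Fin k) ℝ}
    (h : ∀ x : List Γ, f x = α ⬝ᵥ ((x.map A).prod *ᵥ ω)) :
    H f ≤ LinearMap.range (evalMap ω A) := by
  rw [H, Submodule.span_le]
  rintro _ ⟨u, rfl⟩
  refine ⟨α ᵥ* (u.map A).prod, ?_⟩
  funext v
  simp only [evalMap, LinearMap.coe_mk, AddHom.coe_mk, row]
  rw [h (u ++ v), List.map_append, List.prod_append, ← mulVec_mulVec,
    dotProduct_mulVec, dotProduct_mulVec, dotProduct_mulVec]

lemma finiteDim {f : List Γ → ℝ} {k : ℕ} {α ω : Fin k → ℝ}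
    {A : Γ → Matrix (Fin k) (Fin k) ℝ}
    (h : ∀ x : List Γ, f x = α ⬝ᵥ ((x.map A).prod *ᵥ ω)) :
    FiniteDimensional ℝ (H f) :=
  Submodule.finiteDimensional_of_le (H_le_range h)

lemma finrank_le {f : List Γ → ℝ} {k : ℕ} {α ω : Fin k → ℝ}
    {A : Γ → Matrix (Fin k) (Fin k) ℝ}
    (h : ∀ x : List Γ, f x = α ⬝ᵥ ((x.map A).prod *ᵥ ω)) :
    Module.finrank ℝ (H f) ≤ k := by
  haveI : FiniteDimensional ℝ (LinearMap.range (evalMap ω A)) := inferInstance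
  calc Module.finrank ℝ (H f)
      ≤ Module.finrank ℝ (LinearMap.range (evalMap ω A)) :=
        Submodule.finrank_mono (H_le_range h)
    _ ≤ Module.finrank ℝ (Fin k → ℝ) := (evalMap ω A).finrank_range_le
    _ = k := Module.finrank_fin_fun ℝ

/-- The shift operator on functions on words. -/
def shift (σ : Γ) : (List Γ → ℝ) →ₗ[ℝ] (List Γ → ℝ) where
  toFun g := fun v => g (σ :: v)
  map_add' _ _ := rfl
  map_smul' _ _ := rfl

lemma shift_mem (f : List Γ → ℝ) (σ : Γ) : ∀ h ∈ H f, shift σ h ∈ H f := by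
  intro g hg
  induction hg using Submodule.span_induction with
  | mem x hx =>
    obtain ⟨u, rfl⟩ := hx
    apply Submodule.subset_span
    refine ⟨u ++ [σ], ?_⟩
    funext v
    simp [row, shift, List.append_assoc]
  | zero => simpa using (H f).zero_mem
  | add x y _ _ hx hy => simpa using (H f).add_mem hx hy
  | smul c x _ hx => simpa using (H f).smul_mem c hx

lemma exists_wfa (f : List Γ → ℝ) [FiniteDimensional ℝ (H f)] :
    ∃ (α ω : Fin (Module.finrank ℝ (H f)) → ℝ)
      (A : Γ → Matrix (Fin (Module.finrank ℝ (H f))) (Fin (Module.finrank ℝ (H f))) ℝ),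
      ∀ x : List Γ, f x = α ⬝ᵥ ((x.map A).prod *ᵥ ω) := by
  set n := Module.finrank ℝ (H f) with hn
  let b : Module.Basis (Fin n) ℝ (H f) := Module.finBasis ℝ (H f)
  let ω : Fin n → ℝ := fun i => (b i : List Γ → ℝ) []
  let S : Γ → ((H f) →ₗ[ℝ] (H f)) := fun σ => (shift σ).restrict (shift_mem f σ)
  let A : Γ → Matrix (Fin n) (Fin n) ℝ := fun σ i j => b.repr (S σ (b i)) j
  have hrow : row f [] ∈ H f := Submodule.subset_span ⟨[], rfl⟩
  let α : Fin n → ℝ := b.repr ⟨row f [], hrow⟩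
  have coe_sum : ∀ (h : H f) (x : List Γ),
      (h : List Γ → ℝ) x = ∑ j, b.repr h j * (b j : List Γ → ℝ) x := by
    intro h x
    conv_lhs => rw [← b.sum_repr h]
    rw [Submodule.coe_sum]
    simp [Finset.sum_apply]
  have key : ∀ x : List Γ, ∀ i, (b i : List Γ → ℝ) x = ((x.map A).prod *ᵥ ω) i := by
    intro x
    induction x with
    | nil => intro i; simp [ω]
    | cons σ x ih =>
      intro i
      have h1 : (b i : List Γ → ℝ) (σ :: x) = ((S σ (b i) : H f) : List Γ → ℝ) x := rfl
      rw [h1, coe_sum (S σ (b i)) x]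
      have h2 : ∀ j, b.repr (S σ (b i)) j = A σ i j := fun j => rfl
      calc ∑ j, b.repr (S σ (b i)) j * (b j : List Γ → ℝ) x
          = ∑ j, A σ i j * ((x.map A).prod *ᵥ ω) j := by
            refine Finset.sum_congr rfl fun j _ => ?_
            rw [h2 j, ih j]
        _ = (A σ *ᵥ ((x.map A).prod *ᵥ ω)) i := rfl
        _ = (((σ :: x).map A).prod *ᵥ ω) i := by
            rw [mulVec_mulVec, List.map_cons, List.prod_cons]
  refine ⟨α, ω, A, fun x => ?_⟩
  have hfx : f x = row f [] x := rfl
  rw [hfx]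
  have := coe_sum ⟨row f [], hrow⟩ x
  simp only [Submodule.coe_mk] at this
  rw [this]
  simp only [dotProduct]
  refine Finset.sum_congr rfl fun i _ => ?_
  rw [key x i]

end WFAHankelAux

/-- (Theorem 1.) For a function `f : Σ* → ℝ` computed by at least one weighted finite
automaton, the rank of `f` (the minimal number of states of a WFA computing `f`) equals
the dimension of the span of the rows of the Hankel matrix of `f`, i.e. of the family of
functions `v ↦ f (u ++ v)` for `u ∈ Σ*`. -/
theorem wfa_rank_eq_hankel_rank
    {Γ : Type} [Fintype Γ] (f : List Γ → ℝ)
    (hf : ∃ (k : ℕ) (α ω : Fin k → ℝ) (A : Γ → Matrix (Fin k) (Fin k) ℝ),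
      ∀ x : List Γ, f x = α ⬝ᵥ ((x.map A).prod *ᵥ ω)) :
    sInf {n : ℕ | ∃ (α ω : Fin n → ℝ) (A : Γ → Matrix (Fin n) (Fin n) ℝ),
        ∀ x : List Γ, f x = α ⬝ᵥ ((x.map A).prod *ᵥ ω)} =
      Module.finrank ℝ ↥(Submodule.span ℝ
        (Set.range fun u : List Γ => fun v : List Γ => f (u ++ v))) := by
  obtain ⟨k, α, ω, A, hA⟩ := hf
  haveI : FiniteDimensional ℝ (WFAHankelAux.H f) := WFAHankelAux.finiteDim hA
  have hspan : Submodule.span ℝ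
      (Set.range fun u : List Γ => fun v : List Γ => f (u ++ v)) = WFAHankelAux.H f := rfl
  rw [hspan]
  obtain ⟨α', ω', A', hA'⟩ := WFAHankelAux.exists_wfa f
  apply le_antisymm
  · exact Nat.sInf_le ⟨α', ω', A', hA'⟩
  · exact le_csInf ⟨k, α, ω, A, hA⟩ (fun m ⟨β, γ, B, hB⟩ => WFAHankelAux.finrank_le hB)
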